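/- Let A = (a_{ij}) be a symmetric k×k integer matrix and let H = T(u₁, ..., u_k, v) be the free associative graded ℤ-algebra on generators u₁, ..., u_k of degree 2 and v of degree 4, made a graded connected Hopf algebra by declaring each uᵢ primitive and Δv = v⊗1 + 1⊗v + Σ_{i,j} a_{ij} uᵢ⊗uⱼ, extended multiplicatively (this is H_*(ΩΣM⁴;ℤ) for a simply connected 4-manifold M⁴ with intersection form A). If H is isomorphic over ℤ to a primitively generated (Lie-Hopf) Hopf algebra, then there exist an integer k×k matrix Λ with det Λ = ±1 and an integer k×k matrix Γ such that Λᵀ A Λ = −(Γ + Γᵀ). -/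

import Mathlib

/-!
STATEMENT 14 (Buchstaber–Grbić, Section 4.2): for a simply connected
4-manifold `M⁴` with intersection form `A`, the Hopf algebra
`H_*(ΩΣM⁴;ℤ) = T(u₁, …, u_k, v)` (`|uᵢ| = 2`, `|v| = 4`, the `uᵢ` primitive,
`Δv = v⊗1 + 1⊗v + Σ a_{ij} uᵢ⊗uⱼ`) can be isomorphic to a primitively
generated (Lie-Hopf) Hopf algebra only if `ΛᵀAΛ = −(Γ + Γᵀ)` for some integer
matrices `Λ` (with `det Λ = ±1`) and `Γ`.
(All generators have even degree, so no Koszul signs intervene.)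
-/

open scoped TensorProduct

set_option maxSynthPendingDepth 3
set_option synthInstance.maxHeartbeats 1000000
set_option maxHeartbeats 1600000

noncomputable section

variable (k : ℕ)

/-- The free associative `ℤ`-algebra `T(u₁, …, u_k, v)`;
as an algebra this is `H_*(ΩΣM⁴;ℤ)` for a simply connected closed 4-manifold
`M⁴` with `H₂(M⁴) ≅ ℤᵏ` (Bott–Samelson). -/
abbrev LoopHomM4 : Type := FreeAlgebra ℤ (Fin k ⊕ Unit)

/-- The degree-2 generators `u₁, …, u_k` (a basis of `H₂(M⁴;ℤ)`). -/
def u (i : Fin k) : LoopHomM4 k := FreeAlgebra.ι ℤ (Sum.inl i)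

/-- The degree-4 generator `v` (the fundamental class of `M⁴`). -/
def v : LoopHomM4 k := FreeAlgebra.ι ℤ (Sum.inr ())

/-- The comultiplication of `H_*(ΩΣM⁴;ℤ)` determined by the intersection form
`A`: each `uᵢ` is primitive and `Δv = v⊗1 + 1⊗v + Σ_{i,j} a_{ij} uᵢ⊗uⱼ`. -/
def Δ (A : Matrix (Fin k) (Fin k) ℤ) :
    LoopHomM4 k →ₐ[ℤ]
      @TensorProduct ℤ _ (LoopHomM4 k) (LoopHomM4 k) _ _ Algebra.toModule Algebra.toModule :=
  FreeAlgebra.lift ℤ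
    (Sum.elim
      (fun i => u k i ⊗ₜ[ℤ] 1 + 1 ⊗ₜ[ℤ] u k i)
      (fun _ => v k ⊗ₜ[ℤ] 1 + 1 ⊗ₜ[ℤ] v k +
        ∑ i : Fin k, ∑ j : Fin k, A i j • (u k i ⊗ₜ[ℤ] u k j)))

/-- An element is primitive if `Δa = a⊗1 + 1⊗a`. -/
def IsPrimitive (A : Matrix (Fin k) (Fin k) ℤ) (x : LoopHomM4 k) : Prop :=
  Δ k A x = x ⊗ₜ[ℤ] 1 + 1 ⊗ₜ[ℤ] x

namespace Stmt14

/-- Two-variable polynomial ring over `𝔽₂`; inner variable `a`, outer `b`. -/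
abbrev P2 := Polynomial (Polynomial (ZMod 2))

/-- Four-variable polynomial ring over `𝔽₂`: vars `a, b, c, d` inner to outer. -/
abbrev Q4 := Polynomial (Polynomial (Polynomial (Polynomial (ZMod 2))))

def va : Q4 := Polynomial.C (Polynomial.C (Polynomial.C Polynomial.X))
def vb : Q4 := Polynomial.C (Polynomial.C Polynomial.X)
def vc : Q4 := Polynomial.C Polynomial.X
def vd : Q4 := Polynomial.X

/-- coefficient of `1` in `P2` -/
def eL : P2 →ₗ[ℤ] ZMod 2 where
  toFun p := (p.coeff 0).coeff 0
  map_add' p q := by simp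
  map_smul' c p := by simp [Polynomial.coeff_smul]

/-- coefficient of `a` in `P2` -/
def xL : P2 →ₗ[ℤ] ZMod 2 where
  toFun p := (p.coeff 0).coeff 1
  map_add' p q := by simp
  map_smul' c p := by simp [Polynomial.coeff_smul]

/-- coefficient of `b` in `P2` -/
def yL : P2 →ₗ[ℤ] ZMod 2 where
  toFun p := (p.coeff 1).coeff 0
  map_add' p q := by simp
  map_smul' c p := by simp [Polynomial.coeff_smul]

/-- coefficient of `1` in `Q4` -/
def EL : Q4 →ₗ[ℤ] ZMod 2 where
  toFun p := ((((p.coeff 0).coeff 0).coeff 0).coeff 0)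
  map_add' p q := by simp
  map_smul' c p := by simp [Polynomial.coeff_smul]

/-- coefficient of `a` in `Q4` -/
def XaL : Q4 →ₗ[ℤ] ZMod 2 where
  toFun p := ((((p.coeff 0).coeff 0).coeff 0).coeff 1)
  map_add' p q := by simp
  map_smul' c p := by simp [Polynomial.coeff_smul]

/-- coefficient of `c` in `Q4` -/
def XcL : Q4 →ₗ[ℤ] ZMod 2 where
  toFun p := ((((p.coeff 0).coeff 1).coeff 0).coeff 0)
  map_add' p q := by simp
  map_smul' c p := by simp [Polynomial.coeff_smul]

/-- coefficient of `a*c` in `Q4` -/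
def nuL : Q4 →ₗ[ℤ] ZMod 2 where
  toFun p := ((((p.coeff 0).coeff 1).coeff 0).coeff 1)
  map_add' p q := by simp
  map_smul' c p := by simp [Polynomial.coeff_smul]

lemma coeff_one_mul {R : Type} [CommRing R] (p q : Polynomial R) :
    (p*q).coeff 1 = p.coeff 0 * q.coeff 1 + p.coeff 1 * q.coeff 0 := by
  rw [Polynomial.coeff_mul, Finset.Nat.sum_antidiagonal_eq_sum_range_succ_mk]
  simp [Finset.sum_range_succ, add_comm]

lemma eL_mul (p q : P2) : eL (p * q) = eL p * eL q := by
  simp [eL, Polynomial.mul_coeff_zero]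

lemma xL_mul (p q : P2) : xL (p * q) = eL p * xL q + xL p * eL q := by
  simp [xL, eL, Polynomial.mul_coeff_zero, coeff_one_mul]

lemma yL_mul (p q : P2) : yL (p * q) = eL p * yL q + yL p * eL q := by
  simp [yL, eL, coeff_one_mul, Polynomial.mul_coeff_zero]

lemma EL_mul (p q : Q4) : EL (p * q) = EL p * EL q := by
  simp [EL, Polynomial.mul_coeff_zero]

lemma XaL_mul (p q : Q4) : XaL (p * q) = EL p * XaL q + XaL p * EL q := by
  simp [XaL, EL, Polynomial.mul_coeff_zero, coeff_one_mul]

lemma XcL_mul (p q : Q4) : XcL (p * q) = EL p * XcL q + XcL p * EL q := by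
  simp [XcL, EL, Polynomial.mul_coeff_zero, coeff_one_mul]

lemma nuL_mul (p q : Q4) :
    nuL (p * q) = EL p * nuL q + XaL p * XcL q + XcL p * XaL q + nuL p * EL q := by
  simp [nuL, EL, XaL, XcL, Polynomial.mul_coeff_zero, coeff_one_mul]
  ring

section values
open Polynomial
lemma eL_one : eL 1 = 1 := by simp [eL]
lemma xL_one : xL 1 = 0 := by simp [xL, coeff_one]
lemma yL_one : yL 1 = 0 := by simp [yL, coeff_one]
lemma eL_X : eL X = 0 := by simp [eL]
lemma xL_X : xL X = 0 := by simp [xL]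
lemma yL_X : yL X = 1 := by simp [yL]
lemma eL_CX : eL (C X) = 0 := by simp [eL]
lemma xL_CX : xL (C X) = 1 := by simp [xL]
lemma yL_CX : yL (C X) = 0 := by simp [yL]
lemma EL_one : EL 1 = 1 := by simp [EL]
lemma XaL_one : XaL 1 = 0 := by simp [XaL, coeff_one]
lemma XcL_one : XcL 1 = 0 := by simp [XcL, coeff_one]
lemma nuL_one : nuL 1 = 0 := by simp [nuL, coeff_one]
lemma EL_va : EL va = 0 := by simp [EL, va]
lemma EL_vb : EL vb = 0 := by simp [EL, vb]
lemma EL_vc : EL vc = 0 := by simp [EL, vc]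
lemma EL_vd : EL vd = 0 := by simp [EL, vd]
lemma XaL_va : XaL va = 1 := by simp [XaL, va]
lemma XaL_vb : XaL vb = 0 := by simp [XaL, vb]
lemma XaL_vc : XaL vc = 0 := by simp [XaL, vc, coeff_one]
lemma XaL_vd : XaL vd = 0 := by simp [XaL, vd]
lemma XcL_va : XcL va = 0 := by simp [XcL, va]
lemma XcL_vb : XcL vb = 0 := by simp [XcL, vb]
lemma XcL_vc : XcL vc = 1 := by simp [XcL, vc, coeff_one]
lemma XcL_vd : XcL vd = 0 := by simp [XcL, vd]
lemma nuL_va : nuL va = 0 := by simp [nuL, va]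
lemma nuL_vb : nuL vb = 0 := by simp [nuL, vb]
lemma nuL_vc : nuL vc = 0 := by simp [nuL, vc, coeff_one]
lemma nuL_vd : nuL vd = 0 := by simp [nuL, vd]
lemma nuL_vavc : nuL (va * vc) = 1 := by
  simp [nuL, va, vc, Polynomial.mul_coeff_zero, coeff_one_mul, coeff_one]
end values

lemma eL_alg (r : ℤ) : eL (algebraMap ℤ P2 r) = (r : ZMod 2) := by
  rw [Algebra.algebraMap_eq_smul_one, map_smul, eL_one, zsmul_eq_mul, mul_one]
lemma xL_alg (r : ℤ) : xL (algebraMap ℤ P2 r) = 0 := by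
  rw [Algebra.algebraMap_eq_smul_one, map_smul, xL_one, smul_zero]
lemma yL_alg (r : ℤ) : yL (algebraMap ℤ P2 r) = 0 := by
  rw [Algebra.algebraMap_eq_smul_one, map_smul, yL_one, smul_zero]
lemma EL_alg (r : ℤ) : EL (algebraMap ℤ Q4 r) = (r : ZMod 2) := by
  rw [Algebra.algebraMap_eq_smul_one, map_smul, EL_one, zsmul_eq_mul, mul_one]
lemma XaL_alg (r : ℤ) : XaL (algebraMap ℤ Q4 r) = 0 := by
  rw [Algebra.algebraMap_eq_smul_one, map_smul, XaL_one, smul_zero]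
lemma XcL_alg (r : ℤ) : XcL (algebraMap ℤ Q4 r) = 0 := by
  rw [Algebra.algebraMap_eq_smul_one, map_smul, XcL_one, smul_zero]
lemma nuL_alg (r : ℤ) : nuL (algebraMap ℤ Q4 r) = 0 := by
  rw [Algebra.algebraMap_eq_smul_one, map_smul, nuL_one, smul_zero]


variable {k : ℕ}

open Polynomial in
/-- Projection `H → 𝔽₂[a,b]`, `uᵢ ↦ a`, `uⱼ ↦ 0 (j ≠ i)`, `v ↦ b`. -/
def pim (i : Fin k) : LoopHomM4 k →ₐ[ℤ] P2 :=
  FreeAlgebra.lift ℤ (Sum.elim (fun j => if j = i then C X else 0) (fun _ => X))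

/-- First tensor factor of the projection, into `𝔽₂[a,b,c,d]`. -/
def psi1 (i : Fin k) : LoopHomM4 k →ₐ[ℤ] Q4 :=
  FreeAlgebra.lift ℤ (Sum.elim (fun j => if j = i then va else 0) (fun _ => vb))

/-- Second tensor factor of the projection. -/
def psi2 (i : Fin k) : LoopHomM4 k →ₐ[ℤ] Q4 :=
  FreeAlgebra.lift ℤ (Sum.elim (fun j => if j = i then vc else 0) (fun _ => vd))

lemma q4_comm (a b : Q4) : Commute a b := mul_comm a b

def Lhom (i : Fin k) :
    (@TensorProduct ℤ _ (LoopHomM4 k) (LoopHomM4 k) _ _ Algebra.toModule Algebra.toModule) →ₐ[ℤ] Q4 :=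
  Algebra.TensorProduct.lift (psi1 i) (psi2 i) (fun x y => q4_comm _ _)

def Psi (i : Fin k) (A : Matrix (Fin k) (Fin k) ℤ) : LoopHomM4 k →ₐ[ℤ] Q4 :=
  (Lhom i).comp (Δ k A)

lemma Lhom_tmul (i : Fin k) (x y : LoopHomM4 k) :
    Lhom i (x ⊗ₜ[ℤ] y) = psi1 i x * psi2 i y := by
  rw [Lhom, Algebra.TensorProduct.lift_tmul]

open Polynomial in
lemma pim_u (i j : Fin k) : pim i (u k j) = if j = i then C X else 0 := by
  simp [pim, u]

open Polynomial in
lemma pim_v (i : Fin k) : pim i (v k) = X := by simp [pim, v]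

lemma psi1_u (i j : Fin k) : psi1 i (u k j) = if j = i then va else 0 := by
  simp [psi1, u]

lemma psi1_v (i : Fin k) : psi1 i (v k) = vb := by simp [psi1, v]

lemma psi2_u (i j : Fin k) : psi2 i (u k j) = if j = i then vc else 0 := by
  simp [psi2, u]

lemma psi2_v (i : Fin k) : psi2 i (v k) = vd := by simp [psi2, v]

lemma Lhom_tmul' (i : Fin k) (x y : LoopHomM4 k) :
    Lhom i (x ⊗ₜ[ℤ] y : LoopHomM4 k ⊗[ℤ] LoopHomM4 k) = psi1 i x * psi2 i y :=
  Lhom_tmul i x y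

lemma Psi_u (i j : Fin k) (A : Matrix (Fin k) (Fin k) ℤ) :
    Psi i A (u k j) = (if j = i then va else 0) + (if j = i then vc else 0) := by
  have hΔ : Δ k A (u k j) = u k j ⊗ₜ[ℤ] 1 + 1 ⊗ₜ[ℤ] u k j := by
    simp [Δ, u]
  rw [Psi, AlgHom.comp_apply, hΔ]
  refine (map_add (Lhom i) _ _).trans ?_
  rw [Lhom_tmul', Lhom_tmul', map_one, map_one,
    mul_one, one_mul, psi1_u, psi2_u]

lemma Psi_v (i : Fin k) (A : Matrix (Fin k) (Fin k) ℤ) :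
    Psi i A (v k) = vb + vd + (A i i) • (va * vc) := by
  have hΔ : Δ k A (v k) = v k ⊗ₜ[ℤ] 1 + 1 ⊗ₜ[ℤ] v k +
      ∑ p : Fin k, ∑ q : Fin k, A p q • (u k p ⊗ₜ[ℤ] u k q) := by
    simp [Δ, v]
  rw [Psi, AlgHom.comp_apply, hΔ]
  refine ((map_add (Lhom i) _ _).trans (congrArg (· + _) (map_add (Lhom i) _ _))).trans ?_
  refine congrArg (_ + ·) (map_sum (Lhom i) _ _) |>.trans ?_
  rw [Lhom_tmul', Lhom_tmul', map_one,
    map_one, mul_one, one_mul, psi1_v, psi2_v]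
  congr 1
  rw [Finset.sum_eq_single_of_mem i (Finset.mem_univ i)]
  · refine (map_sum (Lhom i) _ _).trans ?_
    rw [Finset.sum_eq_single_of_mem i (Finset.mem_univ i)]
    · refine (map_zsmul (Lhom i) _ _).trans ?_
      rw [Lhom_tmul', psi1_u, psi2_u, if_pos rfl, if_pos rfl]
    · intro q _ hq
      refine (map_zsmul (Lhom i) _ _).trans ?_
      rw [Lhom_tmul', psi2_u, if_neg hq, mul_zero, smul_zero]
  · intro p _ hp
    refine (map_sum (Lhom i) _ _).trans ?_
    apply Finset.sum_eq_zero
    intro q _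
    refine (map_zsmul (Lhom i) _ _).trans ?_
    rw [Lhom_tmul', psi1_u, if_neg hp, zero_mul, smul_zero]

lemma psi1_nu (i : Fin k) (x : LoopHomM4 k) :
    nuL (psi1 i x) = 0 ∧ XcL (psi1 i x) = 0 := by
  induction x using FreeAlgebra.induction with
  | grade0 r =>
    exact ⟨by rw [AlgHom.commutes, nuL_alg], by rw [AlgHom.commutes, XcL_alg]⟩
  | grade1 s =>
    rcases s with j | t
    · show nuL (psi1 i (u k j)) = 0 ∧ XcL (psi1 i (u k j)) = 0
      rw [psi1_u]
      by_cases hj : j = i <;> simp [hj, nuL_va, XcL_va]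
    · show nuL (psi1 i (v k)) = 0 ∧ XcL (psi1 i (v k)) = 0
      rw [psi1_v]
      exact ⟨nuL_vb, XcL_vb⟩
  | mul a b ha hb =>
    rw [map_mul]
    constructor
    · rw [nuL_mul, ha.1, ha.2, hb.1, hb.2]; ring
    · rw [XcL_mul, ha.2, hb.2]; ring
  | add a b ha hb =>
    rw [map_add]
    constructor
    · rw [map_add, ha.1, hb.1]; ring
    · rw [map_add, ha.2, hb.2]; ring

lemma psi2_nu (i : Fin k) (x : LoopHomM4 k) :
    nuL (psi2 i x) = 0 ∧ XaL (psi2 i x) = 0 := by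
  induction x using FreeAlgebra.induction with
  | grade0 r =>
    exact ⟨by rw [AlgHom.commutes, nuL_alg], by rw [AlgHom.commutes, XaL_alg]⟩
  | grade1 s =>
    rcases s with j | t
    · show nuL (psi2 i (u k j)) = 0 ∧ XaL (psi2 i (u k j)) = 0
      rw [psi2_u]
      by_cases hj : j = i <;> simp [hj, nuL_vc, XaL_vc]
    · show nuL (psi2 i (v k)) = 0 ∧ XaL (psi2 i (v k)) = 0
      rw [psi2_v]
      exact ⟨nuL_vd, XaL_vd⟩
  | mul a b ha hb =>
    rw [map_mul]
    constructor
    · rw [nuL_mul, ha.1, ha.2, hb.1, hb.2]; ring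
    · rw [XaL_mul, ha.2, hb.2]; ring
  | add a b ha hb =>
    rw [map_add]
    constructor
    · rw [map_add, ha.1, hb.1]; ring
    · rw [map_add, ha.2, hb.2]; ring


lemma key (i : Fin k) (A : Matrix (Fin k) (Fin k) ℤ)
    (hodd : ((A i i : ℤ) : ZMod 2) = 1) (x : LoopHomM4 k) :
    yL (pim i x) = nuL (Psi i A x) ∧ eL (pim i x) = EL (Psi i A x) ∧
      xL (pim i x) = XaL (Psi i A x) ∧ xL (pim i x) = XcL (Psi i A x) := by
  induction x using FreeAlgebra.induction with
  | grade0 r =>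
    refine ⟨?_, ?_, ?_, ?_⟩ <;> rw [AlgHom.commutes, AlgHom.commutes]
    · rw [yL_alg, nuL_alg]
    · rw [eL_alg, EL_alg]
    · rw [xL_alg, XaL_alg]
    · rw [xL_alg, XcL_alg]
  | grade1 s =>
    rcases s with j | t
    · show yL (pim i (u k j)) = nuL (Psi i A (u k j)) ∧
        eL (pim i (u k j)) = EL (Psi i A (u k j)) ∧
        xL (pim i (u k j)) = XaL (Psi i A (u k j)) ∧
        xL (pim i (u k j)) = XcL (Psi i A (u k j))
      rw [pim_u, Psi_u]
      by_cases hj : j = i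
      · rw [if_pos hj, if_pos hj, if_pos hj]
        exact ⟨by rw [map_add, nuL_va, nuL_vc, yL_CX, add_zero],
               by rw [map_add, EL_va, EL_vc, eL_CX, add_zero],
               by rw [map_add, XaL_va, XaL_vc, xL_CX, add_zero],
               by rw [map_add, XcL_va, XcL_vc, xL_CX, zero_add]⟩
      · rw [if_neg hj, if_neg hj, if_neg hj, add_zero, map_zero, map_zero,
          map_zero, map_zero, map_zero, map_zero]
        exact ⟨rfl, rfl, rfl, rfl⟩
    · show yL (pim i (v k)) = nuL (Psi i A (v k)) ∧
        eL (pim i (v k)) = EL (Psi i A (v k)) ∧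
        xL (pim i (v k)) = XaL (Psi i A (v k)) ∧
        xL (pim i (v k)) = XcL (Psi i A (v k))
      rw [pim_v, Psi_v]
      refine ⟨?_, ?_, ?_, ?_⟩
      · rw [yL_X, map_add, map_add, map_smul, nuL_vb, nuL_vd, nuL_vavc,
          zsmul_eq_mul, mul_one, hodd]
        norm_num
      · rw [eL_X, map_add, map_add, map_smul, EL_vb, EL_vd, EL_mul, EL_va,
          zero_mul, smul_zero]
        norm_num
      · rw [xL_X, map_add, map_add, map_smul, XaL_vb, XaL_vd, XaL_mul, EL_va,
          XaL_va, XaL_vc, EL_vc, zero_mul, mul_zero, add_zero, smul_zero]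
        norm_num
      · rw [xL_X, map_add, map_add, map_smul, XcL_vb, XcL_vd, XcL_mul, EL_va,
          XcL_va, XcL_vc, EL_vc, zero_mul, mul_zero, add_zero, smul_zero]
        norm_num
  | mul a b ha hb =>
    obtain ⟨ha1, ha2, ha3, ha4⟩ := ha
    obtain ⟨hb1, hb2, hb3, hb4⟩ := hb
    rw [map_mul (pim i) a b, map_mul (Psi i A) a b]
    refine ⟨?_, ?_, ?_, ?_⟩
    · rw [yL_mul, nuL_mul, ← ha2, ← hb2, ← ha3, ← hb3, ← ha4, ← hb4, ← ha1, ← hb1]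
      have h2 : (2 : ZMod 2) = 0 := by decide
      linear_combination (-(xL (pim i a) * xL (pim i b))) * h2
    · rw [eL_mul, EL_mul, ha2, hb2]
    · rw [xL_mul, XaL_mul, ha2, hb2, ha3, hb3]
    · rw [xL_mul, XcL_mul, ha2, hb2, ha4, hb4]
  | add a b ha hb =>
    obtain ⟨ha1, ha2, ha3, ha4⟩ := ha
    obtain ⟨hb1, hb2, hb3, hb4⟩ := hb
    refine ⟨?_, ?_, ?_, ?_⟩
    · rw [map_add (pim i), map_add (Psi i A), map_add yL, map_add nuL, ha1, hb1]
    · rw [map_add (pim i), map_add (Psi i A), map_add eL, map_add EL, ha2, hb2]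
    · rw [map_add (pim i), map_add (Psi i A), map_add xL, map_add XaL, ha3, hb3]
    · rw [map_add (pim i), map_add (Psi i A), map_add xL, map_add XcL, ha4, hb4]

lemma yL_pim_primitive (i : Fin k) (A : Matrix (Fin k) (Fin k) ℤ)
    (hodd : ((A i i : ℤ) : ZMod 2) = 1) {x : LoopHomM4 k}
    (hx : IsPrimitive k A x) : yL (pim i x) = 0 := by
  have h := (key i A hodd x).1
  have hPsi : Psi i A x = psi1 i x + psi2 i x := by
    rw [Psi, AlgHom.comp_apply, hx]
    refine (map_add (Lhom i) _ _).trans ?_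
    rw [Lhom_tmul', Lhom_tmul', map_one,
      map_one, mul_one, one_mul]
  rw [h, hPsi, map_add, (psi1_nu i x).1, (psi2_nu i x).1, add_zero]

def Bsub : Subalgebra ℤ P2 where
  carrier := {p | yL p = 0}
  mul_mem' := by
    intro a b ha hb
    simp only [Set.mem_setOf_eq] at *
    rw [yL_mul, ha, hb, mul_zero, zero_mul, add_zero]
  one_mem' := yL_one
  add_mem' := by
    intro a b ha hb
    simp only [Set.mem_setOf_eq] at *
    rw [map_add, ha, hb, add_zero]
  zero_mem' := by simp only [Set.mem_setOf_eq, map_zero]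
  algebraMap_mem' := fun r => yL_alg r

lemma even_diag (A : Matrix (Fin k) (Fin k) ℤ)
    (hpg : Algebra.adjoin ℤ {x : LoopHomM4 k | IsPrimitive k A x} = ⊤)
    (i : Fin k) : Even (A i i) := by
  by_contra hodd
  have hcast : ((A i i : ℤ) : ZMod 2) = 1 := by
    have hne : ((A i i : ℤ) : ZMod 2) ≠ 0 := by
      rw [Ne, ZMod.intCast_zmod_eq_zero_iff_dvd]
      intro hdvd
      obtain ⟨t, ht⟩ := hdvd
      exact hodd ⟨t, by omega⟩
    revert hne
    generalize ((A i i : ℤ) : ZMod 2) = z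
    revert z
    decide
  have hsub : Subalgebra.map (pim i)
      (Algebra.adjoin ℤ {x : LoopHomM4 k | IsPrimitive k A x}) ≤ Bsub := by
    rw [AlgHom.map_adjoin]
    apply Algebra.adjoin_le
    rintro _ ⟨x, hxS, rfl⟩
    exact yL_pim_primitive i A hcast hxS
  have hvmem : pim i (v k) ∈ Subalgebra.map (pim i)
      (Algebra.adjoin ℤ {x : LoopHomM4 k | IsPrimitive k A x}) :=
    ⟨v k, by rw [hpg]; exact Algebra.mem_top, rfl⟩
  have hy : yL (pim i (v k)) = 0 := hsub hvmem
  rw [pim_v, yL_X] at hy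
  exact one_ne_zero hy

end Stmt14

/-- Let `A` be a symmetric `k×k` integer matrix and give
`H = T(u₁, …, u_k, v)` the Hopf algebra structure above (this is
`H_*(ΩΣM⁴;ℤ)` for a simply connected 4-manifold with intersection form `A`).
If `H` is isomorphic over `ℤ` to a primitively generated (Lie-Hopf) Hopf
algebra — equivalently, if `H` is generated as an algebra by its primitive
elements — then there exist integer `k×k` matrices `Λ`, with `det Λ = ±1`,
and `Γ` such that `Λᵀ A Λ = −(Γ + Γᵀ)`. -/
theorem loopHomM4_lieHopf_necessary (A : Matrix (Fin k) (Fin k) ℤ)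
    (hA : A.IsSymm)
    (hpg : Algebra.adjoin ℤ {x : LoopHomM4 k | IsPrimitive k A x} = ⊤) :
    ∃ Λ Γ : Matrix (Fin k) (Fin k) ℤ,
      (Λ.det = 1 ∨ Λ.det = -1) ∧ Λ.transpose * A * Λ = -(Γ + Γ.transpose) := by
  have heven : ∀ i, Even (A i i) := fun i => Stmt14.even_diag A hpg i
  choose c hc using heven
  refine ⟨1, Matrix.of fun p q => if p = q then -(c p)
      else if p < q then -(A p q) else 0, Or.inl (by simp), ?_⟩
  rw [Matrix.transpose_one, Matrix.one_mul, Matrix.mul_one]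
  ext p q
  simp only [Matrix.neg_apply, Matrix.add_apply, Matrix.transpose_apply,
    Matrix.of_apply]
  rcases lt_trichotomy p q with h | h | h
  · rw [if_neg h.ne, if_pos h, if_neg h.ne', if_neg (not_lt.mpr h.le)]
    ring
  · subst h
    have hite : (if p = p then -c p else if p < p then -(A p p) else 0) = -c p :=
      if_pos rfl
    rw [hite, hc p]
    ring
  · rw [if_neg h.ne', if_neg (not_lt.mpr h.le), if_neg h.ne, if_pos h]
    have hsymm : A q p = A p q := by
      have := congrFun (congrFun hA p) q
      simpa [Matrix.transpose_apply] using this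
    rw [hsymm]
    ring

end
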